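/- Let K be a field, R = K[[t^2, t^3]], fix an integer i ≥ 2, a nonempty subset S ⊆ K, and a subset T ⊆ K. Define the map c on the ideals of R by: c(P_{n,a}) = M_n whenever n ≥ i+2, or n = i and a ∈ S, or n = i+1 and a ∈ T; and c(I) = I for every other ideal I (in particular c(M_n) = M_n for all n ≥ 2, c(P_{n,a}) = P_{n,a} when n < i, when n = i and a ∉ S, and when n = i+1 and a ∉ T, c(0) = 0, and c(R) = R). Then c is a semiprime operation on R. -/

import Mathlib

open PowerSeries

set_option synthInstance.maxHeartbeats 1000000
set_option maxHeartbeats 1600000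

/-- A closure operation on the set of ideals of a commutative ring. -/
def IsClosureOperation {R : Type*} [CommRing R] (c : Ideal R → Ideal R) : Prop :=
  (∀ I : Ideal R, I ≤ c I) ∧ (∀ I J : Ideal R, I ≤ J → c I ≤ c J) ∧
    (∀ I : Ideal R, c (c I) = c I)

/-- A semiprime operation: a closure operation satisfying `c I * c J ≤ c (I * J)`. -/
def IsSemiprimeOperation {R : Type*} [CommRing R] (c : Ideal R → Ideal R) : Prop :=
  IsClosureOperation c ∧ ∀ I J : Ideal R, c I * c J ≤ c (I * J)

/-- A prime operation: a semiprime operation satisfying `c (bI) = b c I` for every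
non-zerodivisor `b`. -/
def IsPrimeOperation {R : Type*} [CommRing R] (c : Ideal R → Ideal R) : Prop :=
  IsSemiprimeOperation c ∧
    ∀ b : R, b ∈ nonZeroDivisors R → ∀ I : Ideal R,
      c (Ideal.span {b} * I) = Ideal.span {b} * c I

/-- A (semiprime) operation is bounded if there is a nonzero proper ideal `J`
such that `c I = J` for every nonzero ideal `I ⊆ J`. -/
def IsBoundedOperation {R : Type*} [CommRing R] (c : Ideal R → Ideal R) : Prop :=
  ∃ J : Ideal R, J ≠ ⊥ ∧ J ≠ ⊤ ∧ ∀ I : Ideal R, I ≠ ⊥ → I ≤ J → c I = J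

/-- The ring `K[[t^2, t^3]]`: power series over `K` with vanishing linear coefficient. -/
def cuspRing (K : Type*) [Field K] : Subring (PowerSeries K) where
  carrier := {f | PowerSeries.coeff 1 f = 0}
  zero_mem' := by simp
  one_mem' := by simp
  add_mem' := by
    intro a b ha hb
    simp only [Set.mem_setOf_eq, map_add] at *
    rw [ha, hb, add_zero]
  neg_mem' := by
    intro a ha
    simp only [Set.mem_setOf_eq, map_neg] at *
    rw [ha, neg_zero]
  mul_mem' := by
    intro a b ha hb
    simp only [Set.mem_setOf_eq] at *
    rw [PowerSeries.coeff_mul]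
    rw [Finset.Nat.sum_antidiagonal_eq_sum_range_succ_mk]
    simp [Finset.sum_range_succ, ha, hb]

/-- The principal ideal `P_{n,a} = (t^n + a t^{n+1})` of `K[[t^2,t^3]]`. -/
noncomputable def Pgen (K : Type*) [Field K] (n : ℕ) (a : K) : Ideal (cuspRing K) :=
  Ideal.span {x : cuspRing K |
    (x : PowerSeries K) = X ^ n + PowerSeries.C a * X ^ (n + 1)}

/-- The two-generated ideal `M_n = (t^n, t^{n+1})` of `K[[t^2,t^3]]`. -/
noncomputable def Mgen (K : Type*) [Field K] (n : ℕ) : Ideal (cuspRing K) :=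
  Ideal.span {x : cuspRing K |
    (x : PowerSeries K) = X ^ n ∨ (x : PowerSeries K) = X ^ (n + 1)}

namespace CuspAux

variable {K : Type*} [Field K]

lemma mem_cusp {f : PowerSeries K} : f ∈ cuspRing K ↔ coeff 1 f = 0 := Iff.rfl

lemma coeff1 (x : cuspRing K) : coeff 1 (x : PowerSeries K) = 0 := x.2

lemma Xpow_mem {n : ℕ} (hn : n ≠ 1) : (X ^ n : PowerSeries K) ∈ cuspRing K := by
  rw [mem_cusp, coeff_X_pow, if_neg (fun h => hn h.symm)]

/-- the generator `t^n + a t^(n+1)` as a power series -/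
noncomputable def g (n : ℕ) (a : K) : PowerSeries K := X ^ n + C a * X ^ (n + 1)

lemma g_mem {n : ℕ} (hn : 2 ≤ n) (a : K) : g n a ∈ cuspRing K := by
  rw [mem_cusp, g]
  have h1 : (1:ℕ) ≠ n := by omega
  have h2 : (1:ℕ) ≠ n + 1 := by omega
  simp [coeff_X_pow, h1, h2]
  intro h; omega

noncomputable def tp (n : ℕ) (hn : n ≠ 1) : cuspRing K := ⟨X ^ n, Xpow_mem hn⟩

noncomputable def gelt (n : ℕ) (a : K) (hn : 2 ≤ n) : cuspRing K := ⟨g n a, g_mem hn a⟩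

lemma Pgen_eq {n : ℕ} (hn : 2 ≤ n) (a : K) :
    Pgen K n a = Ideal.span {gelt n a hn} := by
  unfold Pgen
  congr 1
  ext x
  simp only [Set.mem_setOf_eq, Set.mem_singleton_iff, Subtype.ext_iff, gelt, g]

lemma Mgen_eq {n : ℕ} (hn : 2 ≤ n) :
    Mgen K n = Ideal.span {tp n (by omega : n ≠ 1), tp (n+1) (by omega : n+1 ≠ 1)} := by
  unfold Mgen
  congr 1
  ext x
  simp only [Set.mem_setOf_eq, Set.mem_insert_iff, Set.mem_singleton_iff,
    Subtype.ext_iff, tp]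

lemma mem_Pgen {n : ℕ} (hn : 2 ≤ n) {a : K} {x : cuspRing K} :
    x ∈ Pgen K n a ↔
      ∃ f : PowerSeries K, coeff 1 f = 0 ∧ (x : PowerSeries K) = f * g n a := by
  rw [Pgen_eq hn a, Ideal.mem_span_singleton]
  constructor
  · rintro ⟨r, hr⟩
    exact ⟨(r : PowerSeries K), r.2, by
      have := congrArg (Subtype.val) hr
      simpa [gelt, mul_comm] using this⟩
  · rintro ⟨f, hf, hx⟩
    exact ⟨⟨f, hf⟩, Subtype.ext (by simpa [gelt, mul_comm] using hx)⟩

lemma mem_Mgen_of {n : ℕ} (hn : 2 ≤ n) {x : cuspRing K}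
    (h : (X : PowerSeries K) ^ n ∣ (x : PowerSeries K)) : x ∈ Mgen K n := by
  obtain ⟨u, hu⟩ := h
  set q0 : K := coeff 1 u with hq0
  set p : PowerSeries K := u - C q0 * X with hp
  have hpmem : p ∈ cuspRing K := by
    rw [mem_cusp, hp, map_sub]
    simp [hq0]
  have hx : x = (⟨p, hpmem⟩ : cuspRing K) * tp n (by omega) +
      (⟨C q0, by simp [mem_cusp]⟩ : cuspRing K) * tp (n+1) (by omega) := by
    apply Subtype.ext
    push_cast [tp]
    rw [hu, hp]
    ring
  rw [Mgen_eq hn, hx]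
  exact Ideal.add_mem _
    (Ideal.mul_mem_left _ _ (Ideal.subset_span (by left; rfl)))
    (Ideal.mul_mem_left _ _ (Ideal.subset_span (by right; rfl)))

lemma mem_Mgen {n : ℕ} (hn : 2 ≤ n) {x : cuspRing K} :
    x ∈ Mgen K n ↔ (X : PowerSeries K) ^ n ∣ (x : PowerSeries K) := by
  constructor
  · intro hx
    unfold Mgen at hx
    refine Submodule.span_induction ?_ ?_ ?_ ?_ hx
    · rintro y (hy | hy)
      · rw [hy]
      · rw [hy]; exact ⟨X, by ring⟩
    · simp
    · intro y z _ _ hy hz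
      push_cast
      exact dvd_add hy hz
    · intro r y _ hy
      rw [smul_eq_mul]
      push_cast
      exact hy.mul_left _
  · exact mem_Mgen_of hn

/-- the inverse of `1 + bX` -/
noncomputable def w (b : K) : PowerSeries K := PowerSeries.mk fun k => (-b) ^ k

lemma coeff_w (b : K) (k : ℕ) : coeff k (w b) = (-b) ^ k := coeff_mk _ _

lemma w_spec (b : K) : (1 + C b * X) * w b = 1 := by
  ext k
  rw [add_mul, one_mul, mul_assoc, map_add]
  cases k with
  | zero =>
    simp [w, coeff_mk]
  | succ k =>
    rw [coeff_C_mul, coeff_succ_X_mul, coeff_w, coeff_w]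
    have : (k+1) ≠ 0 := by omega
    simp [PowerSeries.coeff_one, this, pow_succ]
    ring

lemma coeff_one_mul' (f h : PowerSeries K) :
    coeff 1 (f * h) = coeff 0 f * coeff 1 h + coeff 1 f * coeff 0 h := by
  rw [PowerSeries.coeff_mul, Finset.Nat.sum_antidiagonal_eq_sum_range_succ_mk]
  simp [Finset.sum_range_succ]

lemma Xpow_mul_mem {k : ℕ} (hk : 2 ≤ k) (u : PowerSeries K) :
    (X : PowerSeries K) ^ k * u ∈ cuspRing K := by
  rw [mem_cusp, coeff_X_pow_mul']
  rw [if_neg (by omega)]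

lemma inv_mem {u : PowerSeries K} (h0 : constantCoeff u ≠ 0) (h1 : coeff 1 u = 0) :
    u⁻¹ ∈ cuspRing K := by
  have := PowerSeries.mul_inv_cancel u h0
  have h := congrArg (coeff 1) this
  rw [coeff_one_mul'] at h
  simp only [PowerSeries.coeff_one, if_neg one_ne_zero] at h
  rw [h1, zero_mul, add_zero, coeff_zero_eq_constantCoeff] at h
  rw [mem_cusp]
  exact (mul_eq_zero.mp h).resolve_left h0

lemma g_eq (n : ℕ) (a : K) : g n a = X ^ n * (1 + C a * X) := by
  rw [g]; ring

lemma Xpow_dvd_g (n : ℕ) (a : K) : (X : PowerSeries K) ^ n ∣ g n a :=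
  ⟨1 + C a * X, g_eq n a⟩

lemma g_coeff_self (n : ℕ) (a : K) : coeff n (g n a) = 1 := by
  rw [g, map_add, coeff_X_pow, coeff_C_mul, coeff_X_pow]
  simp

lemma g_coeff_succ (n : ℕ) (a : K) : coeff (n+1) (g n a) = a := by
  rw [g, map_add, coeff_X_pow, coeff_C_mul, coeff_X_pow]
  simp

lemma g_coeff_lt {k n : ℕ} (h : k < n) (a : K) : coeff k (g n a) = 0 := by
  rw [g, map_add, coeff_X_pow, coeff_C_mul, coeff_X_pow]
  rw [if_neg (by omega), if_neg (by omega)]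
  ring

lemma gelt_mem_Pgen {n : ℕ} (hn : 2 ≤ n) (a : K) : gelt n a hn ∈ Pgen K n a := by
  rw [Pgen_eq hn]
  exact Ideal.subset_span rfl

lemma dvd_of_mem_Pgen {n : ℕ} (hn : 2 ≤ n) {a : K} {x : cuspRing K}
    (h : x ∈ Pgen K n a) : (X : PowerSeries K) ^ n ∣ (x : PowerSeries K) := by
  obtain ⟨f, _, hx⟩ := (mem_Pgen hn).mp h
  rw [hx]
  exact (Xpow_dvd_g n a).mul_left f

lemma Pgen_le_Mgen {n : ℕ} (hn : 2 ≤ n) (a : K) : Pgen K n a ≤ Mgen K n := by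
  intro x hx
  exact mem_Mgen_of hn (dvd_of_mem_Pgen hn hx)

lemma Mgen_mono {m n : ℕ} (hm : 2 ≤ m) (h : m ≤ n) : Mgen K n ≤ Mgen K m := by
  intro x hx
  have := (mem_Mgen (by omega : 2 ≤ n)).mp hx
  exact mem_Mgen_of hm ((pow_dvd_pow X h).trans this)

lemma tp_mem_Pgen {m n : ℕ} (hm : 2 ≤ m) (h : m + 2 ≤ n) (hn1 : n ≠ 1) (b : K) :
    tp n hn1 ∈ (Pgen K m b : Ideal (cuspRing K)) := by
  rw [mem_Pgen hm]
  refine ⟨X ^ (n - m) * w b, ?_, ?_⟩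
  · exact Xpow_mul_mem (by omega) (w b)
  · show (X : PowerSeries K) ^ n = X ^ (n - m) * w b * g m b
    rw [g_eq]
    calc (X : PowerSeries K) ^ n = X ^ (n-m) * X ^ m * ((1 + C b * X) * w b) := by
          rw [w_spec, mul_one, ← pow_add]
          congr 1
          omega
      _ = X ^ (n - m) * w b * (X ^ m * (1 + C b * X)) := by ring

lemma Mgen_le_Pgen {m n : ℕ} (hm : 2 ≤ m) (h : m + 2 ≤ n) (b : K) :
    Mgen K n ≤ Pgen K m b := by
  rw [Mgen_eq (by omega : 2 ≤ n), Ideal.span_le]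
  rintro x (rfl | rfl)
  · exact tp_mem_Pgen hm h _ b
  · exact tp_mem_Pgen hm (by omega) _ b

lemma le_of_Xpow_dvd_g {m n : ℕ} {a : K} (h : (X : PowerSeries K) ^ m ∣ g n a) :
    m ≤ n := by
  by_contra hc
  have := (X_pow_dvd_iff.mp h) n (by omega)
  rw [g_coeff_self] at this
  exact one_ne_zero this

lemma Pgen_le_Pgen_le {n m : ℕ} (hn : 2 ≤ n) (hm : 2 ≤ m) {a b : K}
    (h : Pgen K n a ≤ Pgen K m b) : m ≤ n :=
  le_of_Xpow_dvd_g (dvd_of_mem_Pgen hm (h (gelt_mem_Pgen hn a)))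

lemma Pgen_le_Mgen_le {n m : ℕ} (hn : 2 ≤ n) (hm : 2 ≤ m) {a : K}
    (h : Pgen K n a ≤ Mgen K m) : m ≤ n :=
  le_of_Xpow_dvd_g ((mem_Mgen hm).mp (h (gelt_mem_Pgen hn a)))

lemma Pgen_le_Pgen_cases {n m : ℕ} (hn : 2 ≤ n) (hm : 2 ≤ m) {a b : K}
    (h : Pgen K n a ≤ Pgen K m b) : (n = m ∧ a = b) ∨ m + 2 ≤ n := by
  have hmn : m ≤ n := Pgen_le_Pgen_le hn hm h
  obtain ⟨f, hf1, hfe⟩ := (mem_Pgen hm).mp (h (gelt_mem_Pgen hn a))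
  have hfe' : g n a = f * g m b := hfe
  set v : PowerSeries K := (1 + C a * X) * w b with hv
  have hfv : f = X ^ (n - m) * v := by
    have key : (X : PowerSeries K) ^ m * (X ^ (n - m) * v) = X ^ m * f := by
      calc (X : PowerSeries K) ^ m * (X ^ (n-m) * v)
          = (X ^ m * X ^ (n-m)) * ((1 + C a * X) * w b) := by rw [hv]; ring
        _ = X ^ n * (1 + C a * X) * w b := by
            rw [← pow_add]
            have : m + (n - m) = n := by omega
            rw [this, mul_assoc]
        _ = g n a * w b := by rw [g_eq]
        _ = f * (X ^ m * ((1 + C b * X) * w b)) := by rw [hfe', g_eq]; ring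
        _ = X ^ m * f := by rw [w_spec, mul_one]; ring
    exact (mul_left_cancel₀ (pow_ne_zero m X_ne_zero) key).symm
  have hca0 : coeff 0 (1 + C a * X) = 1 := by
    simp [PowerSeries.coeff_zero_eq_constantCoeff]
  have hca1 : coeff 1 (1 + C a * X) = a := by
    rw [map_add, coeff_C_mul]
    simp [PowerSeries.coeff_one]
  have hv0 : coeff 0 v = 1 := by
    rw [hv, PowerSeries.coeff_mul, Finset.Nat.sum_antidiagonal_eq_sum_range_succ_mk]
    simp [Finset.sum_range_succ, hca0, coeff_w]
  have hv1 : coeff 1 v = a - b := by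
    rw [hv, coeff_one_mul', hca0, hca1, coeff_w, coeff_w]
    ring
  rcases Nat.lt_or_ge n (m + 2) with hlt | hge
  · left
    have hnm : n = m ∨ n = m + 1 := by omega
    rcases hnm with hnm0 | hnm1
    · refine ⟨hnm0, ?_⟩
      have : n - m = 0 := by omega
      rw [this, pow_zero, one_mul] at hfv
      rw [hfv, hv1] at hf1
      exact sub_eq_zero.mp hf1
    · exfalso
      have : n - m = 1 := by omega
      rw [this, pow_one] at hfv
      have : coeff 1 f = coeff 0 v := by
        rw [hfv]
        have := PowerSeries.coeff_X_pow_mul v 1 0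
        simp only [zero_add, pow_one] at this
        exact this
      rw [hf1, hv0] at this
      exact one_ne_zero this.symm
  · right; exact hge

lemma g_ne_zero (n : ℕ) (a : K) : g n a ≠ 0 := by
  intro h
  have := g_coeff_self n a
  rw [h, map_zero] at this
  exact one_ne_zero this.symm

lemma Pgen_ne_bot {n : ℕ} (hn : 2 ≤ n) (a : K) : Pgen K n a ≠ ⊥ := by
  intro h
  have hg := gelt_mem_Pgen hn a
  rw [h, Ideal.mem_bot] at hg
  exact g_ne_zero n a (by simpa [Subtype.ext_iff, gelt] using hg)

lemma Pgen_ne_top {n : ℕ} (hn : 2 ≤ n) (a : K) : Pgen K n a ≠ ⊤ := by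
  intro h
  have h1 : (1 : cuspRing K) ∈ Pgen K n a := by rw [h]; trivial
  obtain ⟨f, _, hf⟩ := (mem_Pgen hn).mp h1
  have : coeff 0 ((1 : cuspRing K) : PowerSeries K) = 0 := by
    rw [hf]
    have : (X : PowerSeries K) ^ n ∣ f * g n a := (Xpow_dvd_g n a).mul_left f
    exact X_pow_dvd_iff.mp this 0 (by omega)
  simp at this

lemma Mgen_ne_bot {n : ℕ} (hn : 2 ≤ n) : Mgen K n ≠ ⊥ := by
  intro h
  have : tp n (by omega : n ≠ 1) ∈ Mgen K n := by
    rw [Mgen_eq hn]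
    exact Ideal.subset_span (by left; rfl)
  rw [h, Ideal.mem_bot] at this
  have h2 := congrArg (fun y : cuspRing K => coeff n (y : PowerSeries K)) this
  simp [tp, coeff_X_pow] at h2

lemma Mgen_ne_top {n : ℕ} (hn : 2 ≤ n) : Mgen K n ≠ ⊤ := by
  intro h
  have h1 : (1 : cuspRing K) ∈ Mgen K n := by rw [h]; trivial
  have := (mem_Mgen hn).mp h1
  have h0 := X_pow_dvd_iff.mp this 0 (by omega)
  simp at h0

lemma Mgen_ne_Pgen {n m : ℕ} (hn : 2 ≤ n) (hm : 2 ≤ m) (b : K) :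
    Mgen K n ≠ Pgen K m b := by
  intro h
  -- g m b ∈ Mgen n gives n ≤ m
  have hg : gelt m b hm ∈ Mgen K n := by rw [h]; exact gelt_mem_Pgen hm b
  have hnm : n ≤ m := le_of_Xpow_dvd_g ((mem_Mgen hn).mp hg)
  -- tp n ∈ Pgen m b gives m ≤ n
  have htp : tp n (by omega : n ≠ 1) ∈ Pgen K m b := by
    rw [← h, Mgen_eq hn]
    exact Ideal.subset_span (by left; rfl)
  obtain ⟨f, hf1, hfe⟩ := (mem_Pgen hm).mp htp
  have hfe' : (X : PowerSeries K) ^ n = f * g m b := hfe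
  have hmn : m ≤ n := by
    by_contra hc
    have : (X:PowerSeries K)^m ∣ (X : PowerSeries K)^n := by
      rw [hfe']; exact (Xpow_dvd_g m b).mul_left f
    have := X_pow_dvd_iff.mp this n (by omega)
    rw [coeff_X_pow, if_pos rfl] at this
    exact one_ne_zero this
  have hem : n = m := le_antisymm hnm hmn
  subst hem
  -- now X^n = f * X^n * (1 + C b X), cancel to get f * (1 + CbX) = 1, so f = w b
  have hf : f * (1 + C b * X) = 1 := by
    have key : (X:PowerSeries K)^n * (f * (1 + C b * X)) = X^n * 1 := by
      calc (X:PowerSeries K)^n * (f * (1 + C b * X)) = f * g n b := by rw [g_eq]; ring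
        _ = X ^ n := hfe'.symm
        _ = X ^ n * 1 := (mul_one _).symm
    exact mul_left_cancel₀ (pow_ne_zero n X_ne_zero) key
  have hfw : f = w b := by
    calc f = f * ((1 + C b * X) * w b) := by rw [w_spec, mul_one]
      _ = (f * (1 + C b * X)) * w b := by ring
      _ = w b := by rw [hf, one_mul]
  rw [hfw, coeff_w] at hf1
  have hb : b = 0 := by
    have : -b = 0 := by simpa using hf1
    exact neg_eq_zero.mp this
  subst hb
  -- now tp (n+1) ∈ Pgen n 0 : X^(n+1) = f' * X^n * 1
  have htp1 : tp (n+1) (by omega : n+1 ≠ 1) ∈ Pgen K n 0 := by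
    rw [← h, Mgen_eq hn]
    exact Ideal.subset_span (by right; rfl)
  obtain ⟨f', hf'1, hf'e⟩ := (mem_Pgen hn).mp htp1
  have hf'e2 : (X : PowerSeries K) ^ (n+1) = f' * g n 0 := hf'e
  have hfx : f' = X := by
    have key : (X:PowerSeries K)^n * X = X^n * f' := by
      calc (X:PowerSeries K)^n * X = X^(n+1) := (pow_succ _ _).symm
        _ = f' * g n 0 := hf'e2
        _ = f' * (X^n * (1 + C 0 * X)) := by rw [g_eq]
        _ = X^n * f' := by rw [map_zero]; ring
    exact (mul_left_cancel₀ (pow_ne_zero n X_ne_zero) key).symm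
  rw [hfx] at hf'1
  simp [PowerSeries.coeff_X] at hf'1

lemma Pgen_mul_Pgen {n m : ℕ} (hn : 2 ≤ n) (hm : 2 ≤ m) (a b : K) :
    Pgen K n a * Pgen K m b = Pgen K (n + m) (a + b) := by
  rw [Pgen_eq hn a, Pgen_eq hm b, Pgen_eq (by omega : 2 ≤ n + m) (a + b),
    Ideal.span_singleton_mul_span_singleton]
  -- key product identity
  have hsplit : ((1:PowerSeries K) + C a * X) * (1 + C b * X)
      = (1 + C (a+b) * X) + C (a*b) * X^2 := by
    rw [map_add, map_mul]
    ring
  have hprod : g n a * g m b = g (n+m) (a+b) * ((1 + C (a*b) * (X^2 * w (a+b)))) := by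
    calc g n a * g m b = X^(n+m) * (((1:PowerSeries K) + C a * X) * (1 + C b * X)) := by
          rw [g_eq, g_eq, pow_add]; ring
      _ = X^(n+m) * ((1 + C (a+b) * X) + C (a*b) * X^2) := by rw [hsplit]
      _ = X^(n+m) * ((1 + C (a+b) * X) * (1 + C (a*b) * (X^2 * w (a+b)))) := by
          have : ((1:PowerSeries K) + C (a+b) * X) * (1 + C (a*b) * (X^2 * w (a+b)))
              = (1 + C (a+b) * X) + C (a*b) * X^2 * ((1 + C (a+b) * X) * w (a+b)) := by
            ring
          rw [this, w_spec, mul_one]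
      _ = g (n+m) (a+b) * (1 + C (a*b) * (X^2 * w (a+b))) := by rw [g_eq]; ring
  have humem : (1:PowerSeries K) + C (a*b) * (X^2 * w (a+b)) ∈ cuspRing K := by
    rw [mem_cusp, map_add, coeff_C_mul]
    have := Xpow_mul_mem (le_refl 2) (w (a+b))
    rw [mem_cusp] at this
    simp [PowerSeries.coeff_one, this]
  apply le_antisymm
  · rw [Ideal.span_singleton_le_span_singleton]
    exact ⟨⟨_, humem⟩, Subtype.ext (by push_cast [gelt]; exact hprod)⟩
  · rw [Ideal.span_singleton_le_span_singleton]
    -- g (n+m) (a+b) = (g n a * g m b) * u'  with u' = inverse of the unit above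
    set u : PowerSeries K := (1:PowerSeries K) + C (a*b) * (X^2 * w (a+b)) with hu
    have hu0 : constantCoeff u ≠ 0 := by
      rw [hu]
      have h2 : constantCoeff (C (a*b) * (X^2 * w (a+b))) = 0 := by
        rw [← coeff_zero_eq_constantCoeff, coeff_C_mul, coeff_X_pow_mul']
        rw [if_neg (by omega)]
        ring
      rw [map_add, h2, add_zero, map_one]
      exact one_ne_zero
    have hu1 : coeff 1 u = 0 := humem
    have huinv : u⁻¹ ∈ cuspRing K := inv_mem hu0 hu1
    refine ⟨⟨u⁻¹, huinv⟩, Subtype.ext ?_⟩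
    push_cast [gelt]
    calc g (n+m) (a+b) = g (n+m) (a+b) * (u * u⁻¹) := by
          rw [PowerSeries.mul_inv_cancel u hu0, mul_one]
      _ = (g (n+m) (a+b) * u) * u⁻¹ := by ring
      _ = (g n a * g m b) * u⁻¹ := by rw [← hprod]

lemma tp_mem_Mgen {n k : ℕ} (hn : 2 ≤ n) (h : n ≤ k) (hk : k ≠ 1) :
    tp k hk ∈ Mgen K n := by
  apply mem_Mgen_of hn
  show (X : PowerSeries K)^n ∣ X ^ k
  exact pow_dvd_pow X h

lemma Pgen_mul_Mgen {n m : ℕ} (hn : 2 ≤ n) (hm : 2 ≤ m) (a : K) :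
    Pgen K n a * Mgen K m = Mgen K (n + m) := by
  apply le_antisymm
  · apply Ideal.mul_le.mpr
    intro r hr s hs
    apply mem_Mgen_of (by omega : 2 ≤ n + m)
    push_cast
    rw [pow_add]
    exact mul_dvd_mul (dvd_of_mem_Pgen hn hr) ((mem_Mgen hm).mp hs)
  · rw [Mgen_eq (by omega : 2 ≤ n + m), Ideal.span_le]
    have hkey : ∀ j : ℕ, m ≤ j → ∀ hj : n + j ≠ 1, tp (n + j) hj ∈ Pgen K n a * Mgen K m := by
      intro j hj hj1
      have hmem : (⟨X ^ j * w a, Xpow_mul_mem (by omega) (w a)⟩ : cuspRing K) ∈ Mgen K m := by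
        apply mem_Mgen_of hm
        show (X : PowerSeries K)^m ∣ X ^ j * w a
        exact Dvd.dvd.mul_right (pow_dvd_pow X hj) _
      have heq : tp (n + j) hj1 = gelt n a hn * ⟨X ^ j * w a, Xpow_mul_mem (by omega) (w a)⟩ := by
        apply Subtype.ext
        push_cast [tp, gelt]
        calc (X : PowerSeries K) ^ (n + j) = X ^ n * X ^ j * ((1 + C a * X) * w a) := by
              rw [w_spec, mul_one, pow_add]
          _ = g n a * (X ^ j * w a) := by rw [g_eq]; ring
      rw [heq]
      exact Ideal.mul_mem_mul (gelt_mem_Pgen hn a) hmem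
    rintro x (rfl | rfl)
    · exact hkey m (le_refl m) _
    · have : n + m + 1 = n + (m + 1) := by omega
      rw [show tp (n+m+1) (by omega : n+m+1 ≠ 1) = tp (n+(m+1)) (by omega : n+(m+1) ≠ 1) from by
        apply Subtype.ext; simp [tp, Nat.add_assoc]]
      exact hkey (m+1) (by omega) _

lemma Mgen_mul_le {n m : ℕ} (hn : 2 ≤ n) (hm : 2 ≤ m) :
    Mgen K n * Mgen K m ≤ Mgen K (n + m) := by
  apply Ideal.mul_le.mpr
  intro r hr s hs
  apply mem_Mgen_of (by omega : 2 ≤ n + m)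
  push_cast
  rw [pow_add]
  exact mul_dvd_mul ((mem_Mgen hn).mp hr) ((mem_Mgen hm).mp hs)

lemma Mgen_mul_Pgen_le {n m : ℕ} (hn : 2 ≤ n) (hm : 2 ≤ m) (b : K) :
    Mgen K n * Pgen K m b ≤ Mgen K (n + m) := by
  apply Ideal.mul_le.mpr
  intro r hr s hs
  apply mem_Mgen_of (by omega : 2 ≤ n + m)
  push_cast
  rw [pow_add]
  exact mul_dvd_mul ((mem_Mgen hn).mp hr) (dvd_of_mem_Pgen hm hs)

lemma unit_mem_top {J : Ideal (cuspRing K)} {x : cuspRing K} (hx : x ∈ J)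
    (h0 : constantCoeff (x : PowerSeries K) ≠ 0) : J = ⊤ := by
  rw [Ideal.eq_top_iff_one]
  have hinv : ((x : PowerSeries K))⁻¹ ∈ cuspRing K := inv_mem h0 x.2
  have h1 : (⟨_, hinv⟩ : cuspRing K) * x = 1 := by
    apply Subtype.ext
    push_cast
    exact PowerSeries.inv_mul_cancel _ h0
  rw [← h1]
  exact Ideal.mul_mem_left _ _ hx

lemma classify (J : Ideal (cuspRing K)) :
    J = ⊥ ∨ J = ⊤ ∨ ∃ n, 2 ≤ n ∧ (J = Mgen K n ∨ ∃ b, J = Pgen K n b) := by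
  by_cases hbot : J = ⊥
  · exact Or.inl hbot
  by_cases htop : J = ⊤
  · exact Or.inr (Or.inl htop)
  refine Or.inr (Or.inr ?_)
  set A : Set ℕ := {k | ∃ x ∈ J, coeff k (x : PowerSeries K) ≠ 0} with hA
  have hAne : A.Nonempty := by
    obtain ⟨x, hxJ, hx0⟩ := (Submodule.ne_bot_iff J).mp hbot
    have hxne : (x : PowerSeries K) ≠ 0 := fun h => hx0 (Subtype.ext h)
    obtain ⟨k, hk⟩ : ∃ k, coeff k (x : PowerSeries K) ≠ 0 := by
      by_contra hc
      push_neg at hc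
      exact hxne (PowerSeries.ext hc)
    exact ⟨k, x, hxJ, hk⟩
  set n := sInf A with hn
  have hnA : n ∈ A := Nat.sInf_mem hAne
  obtain ⟨f, hfJ, hfn⟩ := hnA
  have hmin : ∀ x ∈ J, ∀ k, k < n → coeff k (x : PowerSeries K) = 0 := by
    intro x hx k hk
    by_contra hc
    have hkA : k ∈ A := ⟨x, hx, hc⟩
    have := Nat.sInf_le hkA
    omega
  have hn1 : n ≠ 1 := fun h => hfn (h ▸ f.2)
  have hn0 : n ≠ 0 := by
    intro h
    exact htop (unit_mem_top hfJ (by rwa [← coeff_zero_eq_constantCoeff, ← h]))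
  have hn2 : 2 ≤ n := by omega
  -- normalize to leading coefficient 1
  set f' : cuspRing K :=
    (⟨C (coeff n (f : PowerSeries K))⁻¹, by rw [mem_cusp]; simp⟩ : cuspRing K) * f
    with hf'
  have hf'J : f' ∈ J := Ideal.mul_mem_left _ _ hfJ
  have hf'c : ∀ k, coeff k ((f' : PowerSeries K))
      = (coeff n (f : PowerSeries K))⁻¹ * coeff k (f : PowerSeries K) := by
    intro k
    rw [hf']
    push_cast
    rw [coeff_C_mul]
  have hf'n : coeff n ((f' : PowerSeries K)) = 1 := by
    rw [hf'c]; exact inv_mul_cancel₀ hfn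
  have hf'lt : ∀ k, k < n → coeff k ((f' : PowerSeries K)) = 0 := fun k hk =>
    hmin f' hf'J k hk
  set b := coeff (n+1) ((f' : PowerSeries K)) with hb
  obtain ⟨u, hu⟩ : (X : PowerSeries K) ^ n ∣ (f' : PowerSeries K) :=
    X_pow_dvd_iff.mpr hf'lt
  have hu0 : constantCoeff u ≠ 0 := by
    have hcu : coeff n ((f' : PowerSeries K)) = coeff 0 u := by
      rw [hu]
      simpa using PowerSeries.coeff_X_pow_mul u n 0
    rw [hf'n] at hcu
    rw [← coeff_zero_eq_constantCoeff, ← hcu]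
    exact one_ne_zero
  have hM2 : Mgen K (n+2) ≤ J := by
    have key : ∀ j : ℕ, n + 2 ≤ j → ∀ hj : j ≠ 1, tp j hj ∈ J := by
      intro j hjge hj1
      have hmem : (X : PowerSeries K) ^ (j - n) * u⁻¹ ∈ cuspRing K :=
        Xpow_mul_mem (by omega) _
      have heq : tp j hj1 = f' * ⟨_, hmem⟩ := by
        apply Subtype.ext
        push_cast [tp]
        rw [hu]
        calc (X : PowerSeries K) ^ j = X ^ n * X ^ (j - n) * (u * u⁻¹) := by
              rw [PowerSeries.mul_inv_cancel u hu0, mul_one, ← pow_add]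
              congr 1
              omega
          _ = X ^ n * u * (X ^ (j-n) * u⁻¹) := by ring
      rw [heq]
      exact Ideal.mul_mem_right _ _ hf'J
    rw [Mgen_eq (by omega : 2 ≤ n+2), Ideal.span_le]
    rintro x (rfl | rfl)
    · exact key (n+2) (le_refl _) _
    · exact key (n+2+1) (by omega) _
  have hdiffM : f' - gelt n b hn2 ∈ Mgen K (n+2) := by
    apply mem_Mgen_of (by omega : 2 ≤ n+2)
    apply X_pow_dvd_iff.mpr
    intro k hk
    have hc : ((f' - gelt n b hn2 : cuspRing K) : PowerSeries K)
        = (f' : PowerSeries K) - g n b := rfl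
    rw [hc, map_sub]
    rcases lt_trichotomy k n with hlt | heqn | hgt
    · rw [hf'lt k hlt, g_coeff_lt hlt, sub_self]
    · subst heqn; rw [hf'n, g_coeff_self, sub_self]
    · have hk1 : k = n + 1 := by omega
      subst hk1
      rw [← hb, g_coeff_succ, sub_self]
  have hgJ : gelt n b hn2 ∈ J := by
    have h3 := J.sub_mem hf'J (hM2 hdiffM)
    simpa using h3
  have hPf' : f' ∈ Pgen K n b := by
    have h4 : f' = gelt n b hn2 + (f' - gelt n b hn2) := by ring
    rw [h4]
    exact Ideal.add_mem _ (gelt_mem_Pgen hn2 b)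
      (Mgen_le_Pgen hn2 (le_refl _) b hdiffM)
  by_cases hcase : J ≤ Pgen K n b
  · refine ⟨n, hn2, Or.inr ⟨b, le_antisymm hcase ?_⟩⟩
    rw [Pgen_eq hn2, Ideal.span_le, Set.singleton_subset_iff]
    exact hgJ
  · refine ⟨n, hn2, Or.inl ?_⟩
    obtain ⟨h, hhJ, hhP⟩ : ∃ x ∈ J, x ∉ Pgen K n b := by
      by_contra hc
      push_neg at hc
      exact hcase hc
    set α := coeff n ((h : PowerSeries K)) with hα
    set h' : cuspRing K := h - (⟨C α, by rw [mem_cusp]; simp⟩ : cuspRing K) * f'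
      with hh'
    have hh'J : h' ∈ J := J.sub_mem hhJ (Ideal.mul_mem_left _ _ hf'J)
    have hh'c : ∀ k, coeff k ((h' : PowerSeries K))
        = coeff k (h : PowerSeries K) - α * coeff k ((f' : PowerSeries K)) := by
      intro k
      rw [hh']
      push_cast
      rw [map_sub, coeff_C_mul]
    have hh'n : coeff n ((h' : PowerSeries K)) = 0 := by
      rw [hh'c, hf'n, ← hα]; ring
    have hh'lt : ∀ k, k < n → coeff k ((h' : PowerSeries K)) = 0 := fun k hk =>
      hmin h' hh'J k hk
    set γ := coeff (n+1) ((h' : PowerSeries K)) with hγ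
    have hγ0 : γ ≠ 0 := by
      intro h0
      apply hhP
      have hh'M : h' ∈ Mgen K (n+2) := by
        apply mem_Mgen_of (by omega : 2 ≤ n+2)
        apply X_pow_dvd_iff.mpr
        intro k hk
        rcases lt_trichotomy k n with hlt | heqn | hgt
        · exact hh'lt k hlt
        · subst heqn; exact hh'n
        · have hk1 : k = n + 1 := by omega
          subst hk1
          rw [← hγ, h0]
      have h5 : h = (⟨C α, by rw [mem_cusp]; simp⟩ : cuspRing K) * f' + h' := by
        rw [hh']; ring
      rw [h5]
      exact Ideal.add_mem _ (Ideal.mul_mem_left _ _ hPf')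
        (Mgen_le_Pgen hn2 (le_refl _) b hh'M)
    set x : cuspRing K := (⟨C γ⁻¹, by rw [mem_cusp]; simp⟩ : cuspRing K) * h' with hx
    have hxJ : x ∈ J := Ideal.mul_mem_left _ _ hh'J
    have hxc : ∀ k, coeff k ((x : PowerSeries K)) = γ⁻¹ * coeff k ((h' : PowerSeries K)) := by
      intro k
      rw [hx]
      push_cast
      rw [coeff_C_mul]
    have hT1 : tp (n+1) (by omega : n+1 ≠ 1) ∈ J := by
      have hxd : x - tp (n+1) (by omega) ∈ Mgen K (n+2) := by
        apply mem_Mgen_of (by omega : 2 ≤ n+2)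
        apply X_pow_dvd_iff.mpr
        intro k hk
        have hc : ((x - tp (n+1) (by omega) : cuspRing K) : PowerSeries K)
            = (x : PowerSeries K) - X ^ (n+1) := rfl
        rw [hc, map_sub, hxc, coeff_X_pow]
        rcases lt_trichotomy k n with hlt | heqn | hgt
        · rw [hh'lt k hlt, if_neg (by omega)]; ring
        · subst heqn; rw [hh'n, if_neg (by omega)]; ring
        · have hk1 : k = n + 1 := by omega
          subst hk1
          rw [← hγ, if_pos rfl, inv_mul_cancel₀ hγ0, sub_self]
      have h6 := J.sub_mem hxJ (hM2 hxd)
      simpa using h6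
    have hT0 : tp n (by omega : n ≠ 1) ∈ J := by
      have heq : tp n (by omega : n ≠ 1)
          = gelt n b hn2 - (⟨C b, by rw [mem_cusp]; simp⟩ : cuspRing K) * tp (n+1) (by omega) := by
        apply Subtype.ext
        push_cast [tp, gelt, g]
        ring
      rw [heq]
      exact J.sub_mem hgJ (Ideal.mul_mem_left _ _ hT1)
    apply le_antisymm
    · intro y hy
      exact mem_Mgen_of hn2 (X_pow_dvd_iff.mpr (fun k hk => hmin y hy k hk))
    · rw [Mgen_eq hn2, Ideal.span_le]
      rintro y (rfl | rfl)
      · exact hT0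
      · exact hT1

end CuspAux

open CuspAux

theorem cusp_int_semiprime {K : Type*} [Field K] (i : ℕ) (hi : 2 ≤ i)
    (S T : Set K) (hS : S.Nonempty)
    (c : Ideal (cuspRing K) → Ideal (cuspRing K))
    (h1 : ∀ (n : ℕ) (a : K),
      (i + 2 ≤ n ∨ (n = i ∧ a ∈ S) ∨ (n = i + 1 ∧ a ∈ T)) → c (Pgen K n a) = Mgen K n)
    (h2 : ∀ I : Ideal (cuspRing K),
      (¬ ∃ (n : ℕ) (a : K), I = Pgen K n a ∧
        (i + 2 ≤ n ∨ (n = i ∧ a ∈ S) ∨ (n = i + 1 ∧ a ∈ T))) → c I = I) :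
    IsSemiprimeOperation c := by
  classical
  set Cond : ℕ → K → Prop := fun n a =>
    (i + 2 ≤ n ∨ (n = i ∧ a ∈ S) ∨ (n = i + 1 ∧ a ∈ T)) with hCond
  set spec : Ideal (cuspRing K) → Prop := fun I => ∃ (n : ℕ) (a : K),
    I = Pgen K n a ∧ Cond n a with hspec
  have hcond2 : ∀ {n : ℕ} {a : K}, Cond n a → 2 ≤ n ∧ i ≤ n := by
    rintro n a (h | ⟨rfl, _⟩ | ⟨rfl, _⟩) <;> omega
  have hext : ∀ I, I ≤ c I := by
    intro I
    by_cases hs : spec I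
    · obtain ⟨n, a, rfl, hcn⟩ := hs
      rw [h1 n a hcn]
      exact Pgen_le_Mgen (hcond2 hcn).1 a
    · rw [h2 I hs]
  have hmono : ∀ I J, I ≤ J → c I ≤ c J := by
    intro I J hIJ
    by_cases hsI : spec I
    · obtain ⟨n, a, hIe, hcn⟩ := hsI
      obtain ⟨hn2, hni⟩ := hcond2 hcn
      rw [hIe] at hIJ
      rw [hIe, h1 n a hcn]
      by_cases hsJ : spec J
      · obtain ⟨m, b, hJe, hcm⟩ := hsJ
        obtain ⟨hm2, _⟩ := hcond2 hcm
        rw [hJe] at hIJ ⊢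
        rw [h1 m b hcm]
        exact Mgen_mono hm2 (Pgen_le_Pgen_le hn2 hm2 hIJ)
      · rw [h2 J hsJ]
        rcases classify J with rfl | rfl | ⟨m, hm2, hJM | ⟨b, hJP⟩⟩
        · exact absurd (le_bot_iff.mp hIJ) (Pgen_ne_bot hn2 a)
        · exact le_top
        · rw [hJM] at hIJ ⊢
          exact Mgen_mono hm2 (Pgen_le_Mgen_le hn2 hm2 hIJ)
        · rw [hJP] at hIJ ⊢
          rcases Pgen_le_Pgen_cases hn2 hm2 hIJ with ⟨hnm, hab⟩ | hge
        -- equal case contradicts non-special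
          · exact absurd ⟨m, b, hJP, by rw [← hnm, ← hab]; exact hcn⟩ hsJ
          · exact Mgen_le_Pgen hm2 hge b
    · rw [h2 I hsI]
      exact le_trans hIJ (hext J)
  have hidem : ∀ I, c (c I) = c I := by
    intro I
    by_cases hsI : spec I
    · obtain ⟨n, a, hIe, hcn⟩ := hsI
      obtain ⟨hn2, _⟩ := hcond2 hcn
      rw [hIe, h1 n a hcn]
      apply h2
      rintro ⟨m, b, hMP, hcm⟩
      exact Mgen_ne_Pgen hn2 (hcond2 hcm).1 b hMP
    · simp only [h2 I hsI]
  have hnsM : ∀ k, 2 ≤ k → ¬ spec (Mgen K k) := by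
    intro k hk2
    rintro ⟨m, b, hMP, hcm⟩
    exact Mgen_ne_Pgen hk2 (hcond2 hcm).1 b hMP
  have hmul1 : ∀ I J, spec I → ¬ spec J → c I * c J ≤ c (I * J) := by
    intro I J hsI hsJ
    obtain ⟨n, a, hIe, hcn⟩ := hsI
    obtain ⟨hn2, hni⟩ := hcond2 hcn
    rw [hIe, h1 n a hcn, h2 J hsJ]
    rcases classify J with rfl | rfl | ⟨m, hm2, hJM | ⟨b, hJP⟩⟩
    · rw [Ideal.mul_bot]
      exact bot_le
    · rw [Ideal.mul_top, Ideal.mul_top, h1 n a hcn]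
    · rw [hJM, Pgen_mul_Mgen hn2 hm2 a, h2 (Mgen K (n+m)) (hnsM (n+m) (by omega))]
      exact Mgen_mul_le hn2 hm2
    · rw [hJP, Pgen_mul_Pgen hn2 hm2 a b,
        h1 (n+m) (a+b) (Or.inl (by omega))]
      exact Mgen_mul_Pgen_le hn2 hm2 b
  have hmul : ∀ I J, c I * c J ≤ c (I * J) := by
    intro I J
    by_cases hsI : spec I <;> by_cases hsJ : spec J
    · obtain ⟨n, a, hIe, hcn⟩ := hsI
      obtain ⟨m, b, hJe, hcm⟩ := hsJ
      obtain ⟨hn2, hni⟩ := hcond2 hcn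
      obtain ⟨hm2, hmi⟩ := hcond2 hcm
      rw [hIe, hJe, h1 n a hcn, h1 m b hcm, Pgen_mul_Pgen hn2 hm2 a b,
        h1 (n+m) (a+b) (Or.inl (by omega))]
      exact Mgen_mul_le hn2 hm2
    · exact hmul1 I J hsI hsJ
    · rw [mul_comm (c I) (c J), mul_comm I J]
      exact hmul1 J I hsJ hsI
    · rw [h2 I hsI, h2 J hsJ]
      exact hext (I * J)
  exact ⟨⟨hext, hmono, hidem⟩, hmul⟩
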